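/- arXiv:1711.07310 — 9 statements merged into one kernel-verified Lean document; each statement's English description precedes it below -/
import Mathlib

section
/- In a cooperative game (N,v), a player i is a dummy (i.e., v(S ∪ {i}) = v(S) for all S ⊆ N\{i}) if and only if v({i}) = 0 and i depends on no other player (D(i) = ∅). -/
/-- A player is a dummy iff her singleton value is 0 and her dependency set is empty. -/
theorem dummy_iff_dependencySet_empty {α : Type*} [DecidableEq α]
    (N : Finset α) (v : Finset α → ℝ) (hv0 : v ∅ = 0) (i : α) (hi : i ∈ N) :
    (∀ S ⊆ N.erase i, v (insert i S) - v S = 0) ↔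
    (v {i} = 0 ∧ ∀ j ∈ N, j ≠ i →
      ¬ ∃ S ⊆ N \ {i, j},
          v (insert i (insert j S)) - v (insert j S) ≠ v (insert i S) - v S) := by
  constructor
  · intro h
    refine ⟨by simpa [hv0] using h ∅ (by simp), ?_⟩
    rintro j hj hji ⟨S, hS, hne⟩
    apply hne
    have hS' : S ⊆ N.erase i := by
      intro x hx
      have hx' := hS hx
      simp only [Finset.mem_sdiff, Finset.mem_insert, Finset.mem_singleton, not_or] at hx'
      exact Finset.mem_erase.2 ⟨hx'.2.1, hx'.1⟩
    have hjS : insert j S ⊆ N.erase i :=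
      Finset.insert_subset (Finset.mem_erase.2 ⟨hji, hj⟩) hS'
    rw [h _ hjS, h _ hS']
  · rintro ⟨h1, h2⟩ S
    induction S using Finset.strongInduction with
    | _ S ih =>
      intro hS
      rcases S.eq_empty_or_nonempty with rfl | ⟨j, hj⟩
      · simpa [hv0] using h1
      · have hjN' := Finset.mem_erase.1 (hS hj)
        have hji : j ≠ i := hjN'.1
        have hjN : j ∈ N := hjN'.2
        set S' := S.erase j with hS'def
        have hins : insert j S' = S := Finset.insert_erase hj
        have hS'sub : S' ⊆ N \ {i, j} := by
          intro x hx
          have hxj : x ≠ j := (Finset.mem_erase.1 hx).1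
          have hxS : x ∈ S := (Finset.mem_erase.1 hx).2
          have hx' := Finset.mem_erase.1 (hS hxS)
          simp only [Finset.mem_sdiff, Finset.mem_insert, Finset.mem_singleton, not_or]
          exact ⟨hx'.2, hx'.1, hxj⟩
        have hnodep := h2 j hjN hji
        push_neg at hnodep
        have heq := hnodep S' hS'sub
        rw [hins] at heq
        rw [heq]
        exact ih S' (Finset.erase_ssubset hj) (fun x hx => hS (Finset.mem_of_mem_erase hx))
end

section
/- In a simple game (N,v), distinct players i and j positively depend on each other if and only if there exists a minimal winning coalition S ⊆ N with i,j ∈ S. -/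
/-- In a simple game, two distinct players positively depend on each other iff
some minimal winning coalition contains both of them. -/
theorem posDepends_iff_mem_minimalWinning {α : Type*} [DecidableEq α]
    (N : Finset α) (v : Finset α → ℝ) (hv0 : v ∅ = 0)
    (hmono : ∀ S T : Finset α, S ⊆ T → T ⊆ N → v S ≤ v T)
    (hvals : ∀ S ⊆ N, v S = 0 ∨ v S = 1)
    (i j : α) (hi : i ∈ N) (hj : j ∈ N) (hij : i ≠ j) :
    (∃ T ⊆ N \ {i, j},
        v (insert i (insert j T)) - v (insert j T) > v (insert i T) - v T) ↔
    (∃ S ⊆ N, v S = 1 ∧ (∀ k ∈ S, v (S.erase k) = 0) ∧ i ∈ S ∧ j ∈ S) := by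
  have hnonneg : ∀ S ⊆ N, 0 ≤ v S := by
    intro S hS
    have := hmono ∅ S (Finset.empty_subset S) hS
    linarith [this, hv0.le, hv0.ge]
  constructor
  · rintro ⟨T, hT, hgt⟩
    have hTN : T ⊆ N := hT.trans (Finset.sdiff_subset)
    have hiT : i ∉ T := fun h => by simpa using (hT h)
    have hjT : j ∉ T := fun h => by simpa using (hT h)
    set A := insert i (insert j T) with hAdef
    set B := insert j T with hBdef
    set C := insert i T with hCdef
    have hAN : A ⊆ N := by
      intro x hx
      rcases Finset.mem_insert.mp hx with h | h
      · exact h ▸ hi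
      · rcases Finset.mem_insert.mp h with h | h
        · exact h ▸ hj
        · exact hTN h
    have hBN : B ⊆ N := Finset.insert_subset hj hTN
    have hCN : C ⊆ N := Finset.insert_subset hi hTN
    have hTB : T ⊆ B := Finset.subset_insert _ _
    have hBA : B ⊆ A := Finset.subset_insert _ _
    have hTC : T ⊆ C := Finset.subset_insert _ _
    have hmTB := hmono T B hTB hBN
    have hmBA := hmono B A hBA hAN
    have hA1 : v A = 1 := by
      rcases hvals A hAN with h | h
      · exfalso
        have h1 := hnonneg B hBN
        have h2 := hnonneg T hTN
        have h3 := hnonneg C hCN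
        nlinarith
      · exact h
    have hB0 : v B = 0 := by
      rcases hvals B hBN with h | h
      · exact h
      · exfalso
        have h3 := hnonneg T hTN
        have h4 := hmono T C hTC hCN
        nlinarith
    -- pick a minimum-cardinality winning subset of A
    have hAself : A ∈ N.powerset.filter (fun S => v S = 1) := by
      simp [Finset.mem_filter, Finset.mem_powerset, hAN, hA1]
    obtain ⟨S, hSmem, hSmin⟩ :=
      Finset.exists_min_image (N.powerset.filter (fun S => v S = 1) |>.filter (fun S => S ⊆ A))
        Finset.card ⟨A, by simp [Finset.mem_filter, Finset.mem_powerset, hAN, hA1]⟩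
    simp only [Finset.mem_filter, Finset.mem_powerset] at hSmem
    obtain ⟨⟨hSN, hS1⟩, hSA⟩ := hSmem
    refine ⟨S, hSN, hS1, ?_, ?_, ?_⟩
    · intro k hk
      rcases hvals (S.erase k) ((Finset.erase_subset _ _).trans hSN) with h | h
      · exact h
      · exfalso
        have hmem : S.erase k ∈ (N.powerset.filter (fun S => v S = 1) |>.filter (fun S => S ⊆ A)) := by
          simp only [Finset.mem_filter, Finset.mem_powerset]
          exact ⟨⟨(Finset.erase_subset _ _).trans hSN, h⟩, (Finset.erase_subset _ _).trans hSA⟩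
        have := hSmin _ hmem
        have hlt : (S.erase k).card < S.card := Finset.card_erase_lt_of_mem hk
        omega
    · by_contra hiS
      have hSB : S ⊆ B := by
        intro x hx
        rcases Finset.mem_insert.mp (hSA hx) with h | h
        · exact absurd (h ▸ hx) hiS
        · exact h
      have := hmono S B hSB hBN
      linarith
    · by_contra hjS
      have hSC : S ⊆ C := by
        intro x hx
        rcases Finset.mem_insert.mp (hSA hx) with h | h
        · exact Finset.mem_insert.mpr (Or.inl h)
        · rcases Finset.mem_insert.mp h with h | h
          · exact absurd (h ▸ hx) hjS
          · exact Finset.mem_insert.mpr (Or.inr h)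
      have hC0 : v C = 0 := by
        rcases hvals C hCN with h | h
        · exact h
        · exfalso
          have h3 := hnonneg T hTN
          nlinarith
      have := hmono S C hSC hCN
      linarith
  · rintro ⟨S, hSN, hS1, hmin, hiS, hjS⟩
    refine ⟨S \ {i, j}, ?_, ?_⟩
    · intro x hx
      simp only [Finset.mem_sdiff, Finset.mem_insert, Finset.mem_singleton] at hx ⊢
      exact ⟨hSN hx.1, hx.2⟩
    · have hB : insert j (S \ {i, j}) = S.erase i := by
        ext x
        simp only [Finset.mem_insert, Finset.mem_sdiff, Finset.mem_erase,
          Finset.mem_singleton]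
        constructor
        · rintro (rfl | ⟨hxS, hx⟩)
          · exact ⟨Ne.symm hij, hjS⟩
          · exact ⟨fun h => hx (Or.inl h), hxS⟩
        · rintro ⟨hxi, hxS⟩
          by_cases hxj : x = j
          · exact Or.inl hxj
          · exact Or.inr ⟨hxS, by tauto⟩
      have hA : insert i (insert j (S \ {i, j})) = S := by
        rw [hB]
        ext x
        simp only [Finset.mem_insert, Finset.mem_erase]
        constructor
        · rintro (rfl | ⟨_, h⟩)
          · exact hiS
          · exact h
        · intro hx
          by_cases hxi : x = i
          · exact Or.inl hxi
          · exact Or.inr ⟨hxi, hx⟩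
      have hC : insert i (S \ {i, j}) = S.erase j := by
        ext x
        simp only [Finset.mem_insert, Finset.mem_sdiff, Finset.mem_erase,
          Finset.mem_singleton]
        constructor
        · rintro (rfl | ⟨hxS, hx⟩)
          · exact ⟨hij, hiS⟩
          · exact ⟨fun h => hx (Or.inr h), hxS⟩
        · rintro ⟨hxj, hxS⟩
          by_cases hxi : x = i
          · exact Or.inl hxi
          · exact Or.inr ⟨hxS, by tauto⟩
      rw [hA, hB, hC, hmin i hiS, hmin j hjS, hS1]
      have hTN : S \ {i, j} ⊆ N := (Finset.sdiff_subset).trans hSN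
      have h1 : v (S \ {i, j}) ≤ v (S.erase j) := by
        apply hmono _ _ _ ((Finset.erase_subset _ _).trans hSN)
        intro x hx
        simp only [Finset.mem_sdiff, Finset.mem_insert, Finset.mem_singleton] at hx
        exact Finset.mem_erase.mpr ⟨fun h => hx.2 (Or.inr h), hx.1⟩
      have h2 := hnonneg _ hTN
      have h3 : v (S \ {i, j}) = 0 := le_antisymm (by rw [hmin j hjS] at h1; exact h1) h2
      rw [h3]
      norm_num
end

section
/- In a weighted voting game [N; w; q], if player i positively depends on player k and w_i ≥ w_j ≥ w_k for some player j distinct from i and k, then player i positively depends on player j. -/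
/-- In a weighted voting game, if `i` positively depends on `k` and
`w k ≤ w j ≤ w i`, then `i` positively depends on `j`. -/
theorem wvg_posDepends_of_weight_between {α : Type*} [DecidableEq α]
    (N : Finset α) (w : α → ℝ) (hw : ∀ a, 0 ≤ w a) (q : ℝ) (hq : 0 < q)
    (i j k : α) (hi : i ∈ N) (hj : j ∈ N) (hk : k ∈ N)
    (hji : j ≠ i) (hjk : j ≠ k) (hik : i ≠ k)
    (hwk : w k ≤ w j) (hwj : w j ≤ w i)
    (hdep : ∃ S ⊆ N \ {i, k},
      q ≤ ∑ a ∈ insert i (insert k S), w a ∧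
      ¬ q ≤ ∑ a ∈ insert i S, w a ∧
      ¬ q ≤ ∑ a ∈ insert k S, w a) :
    ∃ S ⊆ N \ {i, j},
      q ≤ ∑ a ∈ insert i (insert j S), w a ∧
      ¬ q ≤ ∑ a ∈ insert i S, w a ∧
      ¬ q ≤ ∑ a ∈ insert j S, w a := by
  obtain ⟨S, hS, hwin, hli, hlk⟩ := hdep
  have hiS : i ∉ S := fun h => ((Finset.mem_sdiff.mp (hS h)).2 (by simp))
  have hkS : k ∉ S := fun h => ((Finset.mem_sdiff.mp (hS h)).2 (by simp))
  have hSN : ∀ a ∈ S, a ∈ N := fun a ha => (Finset.mem_sdiff.mp (hS ha)).1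
  have haiS : ∀ a ∈ S, a ≠ i := fun a ha h => by
    exact (Finset.mem_sdiff.mp (hS ha)).2 (by simp [h])
  by_cases hjS : j ∈ S
  · -- swap j out, k in
    refine ⟨insert k (S.erase j), ?_, ?_, ?_, ?_⟩
    · intro a ha
      rcases Finset.mem_insert.mp ha with rfl | ha
      · exact Finset.mem_sdiff.mpr ⟨hk, by simp [hik.symm, hjk.symm]⟩
      · obtain ⟨haj, haS⟩ := Finset.mem_erase.mp ha
        exact Finset.mem_sdiff.mpr ⟨hSN a haS, by simp [haiS a haS, haj]⟩
    all_goals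
      have hkE : k ∉ S.erase j := fun h => hkS (Finset.mem_erase.mp h).2
      have hjE : j ∉ S.erase j := Finset.notMem_erase j S
      have hiE : i ∉ S.erase j := fun h => hiS (Finset.mem_erase.mp h).2
      have hsum : w j + ∑ a ∈ S.erase j, w a = ∑ a ∈ S, w a :=
        Finset.add_sum_erase S w hjS
    · rw [Finset.sum_insert (by simp [hik, hji.symm, hiE]),
        Finset.sum_insert (by simp [hjk, hjE]), Finset.sum_insert hkE]
      rw [Finset.sum_insert (by simp [hik, hiS]), Finset.sum_insert hkS] at hwin
      linarith
    · rw [Finset.sum_insert (by simp [hik, hiE]), Finset.sum_insert hkE]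
      rw [Finset.sum_insert hiS] at hli
      intro h; exact hli (by linarith [not_le.mp hli])
    · rw [Finset.sum_insert (by simp [hjk, hjE]), Finset.sum_insert hkE]
      rw [Finset.sum_insert hkS] at hlk
      intro h; exact hlk (by linarith)
  · refine ⟨S, ?_, ?_, ?_, ?_⟩
    · intro a ha
      exact Finset.mem_sdiff.mpr ⟨hSN a ha,
        by
          simp only [Finset.mem_insert, Finset.mem_singleton]
          push_neg
          exact ⟨haiS a ha, fun h => hjS (h ▸ ha)⟩⟩
    · rw [Finset.sum_insert (by simp [hji.symm, hiS]), Finset.sum_insert hjS]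
      rw [Finset.sum_insert (by simp [hik, hiS]), Finset.sum_insert hkS] at hwin
      linarith
    · exact hli
    · rw [Finset.sum_insert hjS]
      rw [Finset.sum_insert hiS] at hli
      intro h; exact hli (by linarith)
end

section
/- The supermodular dependency graph of any weighted voting game [N; w; q] is chordal: it has no induced cycle of length at least 4. -/
open Finset

/-- The supermodular dependency adjacency relation of a weighted voting game. -/
def wvgPosDep {α : Type*} [Fintype α] [DecidableEq α] (w : α → ℝ) (q : ℝ) (i j : α) : Prop :=
  i ≠ j ∧ ∃ S ⊆ (Finset.univ : Finset α) \ {i, j},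
    q ≤ ∑ a ∈ insert i (insert j S), w a ∧
    ¬ q ≤ ∑ a ∈ insert i S, w a ∧
    ¬ q ≤ ∑ a ∈ insert j S, w a

lemma wvgPosDep_iff {α : Type*} [Fintype α] [DecidableEq α] (w : α → ℝ) (q : ℝ) (i j : α) :
    wvgPosDep w q i j ↔ i ≠ j ∧ ∃ S : Finset α, i ∉ S ∧ j ∉ S ∧
      q ≤ w i + (w j + ∑ a ∈ S, w a) ∧
      w i + ∑ a ∈ S, w a < q ∧ w j + ∑ a ∈ S, w a < q := by
  unfold wvgPosDep
  constructor
  · rintro ⟨hij, S, hS, h1, h2, h3⟩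
    have hiS : i ∉ S := fun h => by
      have := hS h
      simp [Finset.mem_sdiff] at this
    have hjS : j ∉ S := fun h => by
      have := hS h
      simp [Finset.mem_sdiff] at this
    have hiJS : i ∉ insert j S := by simp [hij, hiS]
    rw [Finset.sum_insert hiJS, Finset.sum_insert hjS] at h1
    rw [Finset.sum_insert hiS] at h2
    rw [Finset.sum_insert hjS] at h3
    exact ⟨hij, S, hiS, hjS, h1, lt_of_not_ge h2, lt_of_not_ge h3⟩
  · rintro ⟨hij, S, hiS, hjS, h1, h2, h3⟩
    refine ⟨hij, S, ?_, ?_, ?_, ?_⟩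
    · intro a ha
      simp only [Finset.mem_sdiff, Finset.mem_univ, true_and, Finset.mem_insert,
        Finset.mem_singleton]
      push_neg
      exact ⟨fun h => hiS (h ▸ ha), fun h => hjS (h ▸ ha)⟩
    · have hiJS : i ∉ insert j S := by simp [hij, hiS]
      rw [Finset.sum_insert hiJS, Finset.sum_insert hjS]
      exact h1
    · rw [Finset.sum_insert hiS]; exact not_le.mpr h2
    · rw [Finset.sum_insert hjS]; exact not_le.mpr h3

lemma wvgPosDep_trans_of_min {α : Type*} [Fintype α] [DecidableEq α] (w : α → ℝ) (q : ℝ)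
    {i j k : α} (hik : i ≠ k) (hji : w j ≤ w i) (hjk : w j ≤ w k)
    (h1 : wvgPosDep w q i j) (h2 : wvgPosDep w q j k) : wvgPosDep w q i k := by
  rw [wvgPosDep_iff] at h1 h2 ⊢
  obtain ⟨hij, S, hiS, hjS, qS, Si, Sj⟩ := h1
  obtain ⟨hjk', T, hjT, hkT, qT, Tj, Tk⟩ := h2
  refine ⟨hik, ?_⟩
  by_cases hkS : k ∈ S
  · -- replace k by j in S
    have hjE : j ∉ S.erase k := fun h => hjS (Finset.mem_of_mem_erase h)
    have hsum : ∑ a ∈ insert j (S.erase k), w a = w j + (∑ a ∈ S, w a - w k) := by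
      rw [Finset.sum_insert hjE]
      have := Finset.add_sum_erase S w hkS
      linarith
    refine ⟨insert j (S.erase k), ?_, ?_, ?_, ?_, ?_⟩
    · intro h
      rcases Finset.mem_insert.mp h with h | h
      · exact hij h
      · exact hiS (Finset.mem_of_mem_erase h)
    · intro h
      rcases Finset.mem_insert.mp h with h | h
      · exact hjk' h.symm
      · exact (Finset.notMem_erase k S) h
    · rw [hsum]; linarith
    · rw [hsum]; linarith
    · rw [hsum]; linarith
  · by_cases hSk : w k + ∑ a ∈ S, w a < q
    · exact ⟨S, hiS, hkS, by linarith, Si, hSk⟩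
    · push_neg at hSk
      by_cases hiT : i ∈ T
      · -- replace i by j in T
        have hjE : j ∉ T.erase i := fun h => hjT (Finset.mem_of_mem_erase h)
        have hsum : ∑ a ∈ insert j (T.erase i), w a = w j + (∑ a ∈ T, w a - w i) := by
          rw [Finset.sum_insert hjE]
          have := Finset.add_sum_erase T w hiT
          linarith
        refine ⟨insert j (T.erase i), ?_, ?_, ?_, ?_, ?_⟩
        · intro h
          rcases Finset.mem_insert.mp h with h | h
          · exact hij h
          · exact (Finset.notMem_erase i T) h
        · intro h
          rcases Finset.mem_insert.mp h with h | h
          · exact hjk' h.symm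
          · exact hkT (Finset.mem_of_mem_erase h)
        · rw [hsum]; linarith
        · rw [hsum]; linarith
        · rw [hsum]; linarith
      · by_cases hTi : w i + ∑ a ∈ T, w a < q
        · exact ⟨T, hiT, hkT, by linarith, hTi, Tk⟩
        · push_neg at hTi
          exfalso
          -- w i < w k from S, w k < w i from T
          linarith

/-- The supermodular dependency graph of a weighted voting game is chordal:
it contains no induced cycle of length at least 4. -/
theorem wvg_supermodularDependencyGraph_chordal {α : Type*} [Fintype α] [DecidableEq α]
    (w : α → ℝ) (hw : ∀ a, 0 ≤ w a) (q : ℝ) (hq : 0 < q) :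
    ¬ ∃ (m : ℕ) (f : ZMod m → α), 4 ≤ m ∧ Function.Injective f ∧
        ∀ a b : ZMod m, wvgPosDep w q (f a) (f b) ↔ (b = a + 1 ∨ a = b + 1) := by
  rintro ⟨m, f, hm, hf, hcyc⟩
  haveI : NeZero m := ⟨by omega⟩
  have hcast : ∀ c : ℕ, 0 < c → c < m → ((c : ℕ) : ZMod m) ≠ 0 := by
    intro c hc1 hc2 h
    have := (ZMod.natCast_eq_zero_iff c m).mp h
    have := Nat.le_of_dvd hc1 this
    omega
  have h1 : (1 : ZMod m) ≠ 0 := by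
    have := hcast 1 (by omega) (by omega); simpa using this
  have h2 : (2 : ZMod m) ≠ 0 := by
    have := hcast 2 (by omega) (by omega); simpa using this
  have h3 : (3 : ZMod m) ≠ 0 := by
    have := hcast 3 (by omega) (by omega); simpa using this
  obtain ⟨v, -, hv⟩ := Finset.exists_min_image (Finset.univ : Finset (ZMod m))
    (fun a => w (f a)) ⟨0, Finset.mem_univ 0⟩
  have e1 : wvgPosDep w q (f (v - 1)) (f v) := (hcyc (v - 1) v).mpr (Or.inl (by ring))
  have e2 : wvgPosDep w q (f v) (f (v + 1)) := (hcyc v (v + 1)).mpr (Or.inl rfl)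
  have hik : f (v - 1) ≠ f (v + 1) := by
    intro h
    have hvv : v - 1 = v + 1 := hf h
    apply h2
    have : (v + 1) - (v - 1) = 0 := by rw [← hvv]; ring
    calc (2 : ZMod m) = (v + 1) - (v - 1) := by ring
      _ = 0 := this
  have hkey := wvgPosDep_trans_of_min w q hik (hv (v - 1) (Finset.mem_univ _))
    (hv (v + 1) (Finset.mem_univ _)) e1 e2
  rcases (hcyc (v - 1) (v + 1)).mp hkey with h | h
  · apply h1
    have : (v + 1) - v = 0 := by
      rw [h]; ring
    calc (1 : ZMod m) = (v + 1) - v := by ring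
      _ = 0 := this
  · apply h3
    have : ((v + 1) + 1) - (v - 1) = 0 := by rw [← h]; ring
    calc (3 : ZMod m) = ((v + 1) + 1) - (v - 1) := by ring
      _ = 0 := this
end

section
/- Let (N,v) be a cooperative game, i ∈ N, D(i) its dependency set, and I(i) = N \ (D(i) ∪ {i}). Then for every S ⊆ D(i) and every T ⊆ I(i), v(i | S ∪ T) = v(i | S), i.e., v(S ∪ T ∪ {i}) − v(S ∪ T) = v(S ∪ {i}) − v(S). -/
/-- Lemma 5: adding players on whom `i` does not depend does not change
`i`'s marginal contribution. -/
theorem marginal_eq_of_indep {α : Type*} [DecidableEq α]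
    (N : Finset α) (v : Finset α → ℝ) (hv0 : v ∅ = 0) (i : α) (hi : i ∈ N)
    (S T : Finset α) (hS : S ⊆ N.erase i) (hT : T ⊆ N.erase i)
    (hSdep : ∀ j ∈ S, ∃ U ⊆ N \ {i, j},
        v (insert i (insert j U)) - v (insert j U) ≠ v (insert i U) - v U)
    (hTindep : ∀ j ∈ T, ¬ ∃ U ⊆ N \ {i, j},
        v (insert i (insert j U)) - v (insert j U) ≠ v (insert i U) - v U) :
    v (insert i (S ∪ T)) - v (S ∪ T) = v (insert i S) - v S := by
  induction T using Finset.induction_on with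
  | empty => simp
  | @insert j T' hj ih =>
    have hT' : T' ⊆ N.erase i := fun x hx => hT (Finset.mem_insert_of_mem hx)
    have hTindep' : ∀ k ∈ T', ¬ ∃ U ⊆ N \ {i, k},
        v (insert i (insert k U)) - v (insert k U) ≠ v (insert i U) - v U :=
      fun k hk => hTindep k (Finset.mem_insert_of_mem hk)
    have hjmem : j ∈ N.erase i := hT (Finset.mem_insert_self j T')
    by_cases hjS : j ∈ S
    · exact absurd (hSdep j hjS) (hTindep j (Finset.mem_insert_self j T'))
    · have hjU : j ∉ S ∪ T' := by simp [hjS, hj]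
      have hUsub : S ∪ T' ⊆ N \ {i, j} := by
        intro x hx
        have hx' : x ∈ N.erase i := by
          rcases Finset.mem_union.mp hx with h | h
          · exact hS h
          · exact hT' h
        simp only [Finset.mem_sdiff, Finset.mem_insert, Finset.mem_singleton]
        refine ⟨Finset.mem_of_mem_erase hx', ?_⟩
        rintro (rfl | rfl)
        · exact (Finset.ne_of_mem_erase hx') rfl
        · exact hjU hx
      have hindep := hTindep j (Finset.mem_insert_self j T')
      push_neg at hindep
      have key := hindep (S ∪ T') hUsub
      have hrw : S ∪ insert j T' = insert j (S ∪ T') := by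
        ext x; simp [Finset.mem_union, Finset.mem_insert, or_left_comm]
      rw [hrw, key]
      exact ih hT' hTindep'
end

section
/- Let (N,v) be a cooperative game with n players, i ∈ N, D(i) its dependency set and I(i) = N \ (D(i) ∪ {i}). Then the Shapley value of i satisfies φ_i(N,v) = Σ_{S ⊆ D(i)} v(i|S) · Σ_{t=0}^{|I(i)|} C(|I(i)|, t) · (|S|+t)! (n−|S|−t−1)! / n!. -/
open Finset

open Classical in
/-- The dependency set of a player `i` in a cooperative game `(N, v)`. -/
noncomputable def depSet {α : Type*} [DecidableEq α] (N : Finset α) (v : Finset α → ℝ)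
    (i : α) : Finset α :=
  (N.erase i).filter (fun j => ∃ S ⊆ N \ {i, j},
    v (insert i (insert j S)) - v (insert j S) ≠ v (insert i S) - v S)

lemma depSet_subset {α : Type*} [DecidableEq α] (N : Finset α) (v : Finset α → ℝ) (i : α) :
    depSet N v i ⊆ N.erase i := by
  classical
  exact Finset.filter_subset _ _

lemma indep_marginal {α : Type*} [DecidableEq α] (N : Finset α) (v : Finset α → ℝ) (i : α)
    {j : α} (hj : j ∈ (N.erase i) \ depSet N v i) :
    ∀ S ⊆ N \ {i, j},
      v (insert i (insert j S)) - v (insert j S) = v (insert i S) - v S := by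
  classical
  rw [Finset.mem_sdiff] at hj
  obtain ⟨hj1, hj2⟩ := hj
  intro S hS
  by_contra h
  exact hj2 (by rw [depSet, Finset.mem_filter]; exact ⟨hj1, S, hS, h⟩)

lemma marginal_union {α : Type*} [DecidableEq α] (N : Finset α) (v : Finset α → ℝ) (i : α)
    (B : Finset α) :
    B ⊆ (N.erase i) \ depSet N v i → ∀ A ⊆ depSet N v i,
      v (insert i (A ∪ B)) - v (A ∪ B) = v (insert i A) - v A := by
  classical
  induction B using Finset.induction_on with
  | empty => intro _ A _; simp
  | @insert j B' hjB ih =>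
    intro hB A hA
    have hj : j ∈ (N.erase i) \ depSet N v i := hB (Finset.mem_insert_self _ _)
    have hB' : B' ⊆ (N.erase i) \ depSet N v i :=
      fun x hx => hB (Finset.mem_insert_of_mem hx)
    have hsub : A ∪ B' ⊆ N \ {i, j} := by
      intro x hx
      rw [Finset.mem_sdiff, Finset.mem_insert, Finset.mem_singleton]
      rcases Finset.mem_union.1 hx with hxA | hxB
      · have hx1 := depSet_subset N v i (hA hxA)
        refine ⟨Finset.mem_of_mem_erase hx1, ?_⟩
        push_neg
        constructor
        · exact Finset.ne_of_mem_erase hx1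
        · rintro rfl
          exact (Finset.mem_sdiff.1 hj).2 (hA hxA)
      · have hx1 := (Finset.mem_sdiff.1 (hB' hxB)).1
        refine ⟨Finset.mem_of_mem_erase hx1, ?_⟩
        push_neg
        exact ⟨Finset.ne_of_mem_erase hx1, fun h => hjB (h ▸ hxB)⟩
    rw [Finset.union_insert]
    rw [indep_marginal N v i hj _ hsub]
    exact ih hB' A hA

/-- The Shapley value can be computed by summing over subsets of the dependency set. -/
theorem shapley_eq_sum_over_depSet {α : Type*} [DecidableEq α]
    (N : Finset α) (v : Finset α → ℝ) (hv0 : v ∅ = 0) (i : α) (hi : i ∈ N) :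
    (∑ S ∈ (N.erase i).powerset,
        ((Nat.factorial S.card : ℝ) * Nat.factorial (N.card - S.card - 1) /
          Nat.factorial N.card) * (v (insert i S) - v S)) =
    ∑ S ∈ (depSet N v i).powerset, (v (insert i S) - v S) *
      ∑ t ∈ Finset.range (((N.erase i) \ depSet N v i).card + 1),
        (Nat.choose ((N.erase i) \ depSet N v i).card t : ℝ) *
          Nat.factorial (S.card + t) * Nat.factorial (N.card - S.card - t - 1) /
            Nat.factorial N.card := by
  classical
  set D := depSet N v i with hD
  set I := (N.erase i) \ D with hI
  have hDsub : D ⊆ N.erase i := depSet_subset N v i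
  have hDI : Disjoint D I := Finset.disjoint_sdiff
  have hunion : D ∪ I = N.erase i := Finset.union_sdiff_of_subset hDsub
  -- split the sum over the powerset of `N.erase i` into a double sum
  have key : ∀ (f : Finset α → ℝ),
      ∑ S ∈ (N.erase i).powerset, f S =
        ∑ A ∈ D.powerset, ∑ B ∈ I.powerset, f (A ∪ B) := by
    intro f
    rw [← Finset.sum_product']
    refine (Finset.sum_nbij' (fun p => p.1 ∪ p.2) (fun S => (S ∩ D, S ∩ I)) ?_ ?_ ?_ ?_ ?_).symm
    · rintro ⟨A, B⟩ hp
      rw [Finset.mem_product, Finset.mem_powerset, Finset.mem_powerset] at hp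
      rw [Finset.mem_powerset, ← hunion]
      exact Finset.union_subset_union hp.1 hp.2
    · intro S hS
      rw [Finset.mem_powerset] at hS
      rw [Finset.mem_product, Finset.mem_powerset, Finset.mem_powerset]
      exact ⟨Finset.inter_subset_right, Finset.inter_subset_right⟩
    · rintro ⟨A, B⟩ hp
      rw [Finset.mem_product, Finset.mem_powerset, Finset.mem_powerset] at hp
      have hBD : ∀ x ∈ B, x ∉ D := fun x hx => Finset.disjoint_right.1 hDI (hp.2 hx)
      have hAI : ∀ x ∈ A, x ∉ I := fun x hx => Finset.disjoint_left.1 hDI (hp.1 hx)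
      have h1 : (A ∪ B) ∩ D = A := by
        ext x
        simp only [Finset.mem_inter, Finset.mem_union]
        exact ⟨fun h => h.1.resolve_right (fun hxB => hBD x hxB h.2),
          fun hx => ⟨Or.inl hx, hp.1 hx⟩⟩
      have h2 : (A ∪ B) ∩ I = B := by
        ext x
        simp only [Finset.mem_inter, Finset.mem_union]
        exact ⟨fun h => h.1.resolve_left (fun hxA => hAI x hxA h.2),
          fun hx => ⟨Or.inr hx, hp.2 hx⟩⟩
      simp only [h1, h2]
    · intro S hS
      rw [Finset.mem_powerset] at hS
      show S ∩ D ∪ S ∩ I = S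
      rw [← Finset.inter_union_distrib_left, hunion, Finset.inter_eq_left.2 hS]
    · rintro ⟨A, B⟩ _
      rfl
  rw [key]
  refine Finset.sum_congr rfl fun A hA => ?_
  rw [Finset.mem_powerset] at hA
  have step : ∀ B ∈ I.powerset,
      ((Nat.factorial (A ∪ B).card : ℝ) * Nat.factorial (N.card - (A ∪ B).card - 1) /
          Nat.factorial N.card) * (v (insert i (A ∪ B)) - v (A ∪ B)) =
      (v (insert i A) - v A) *
        ((Nat.factorial (A.card + B.card) : ℝ) *
          Nat.factorial (N.card - A.card - B.card - 1) / Nat.factorial N.card) := by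
    intro B hB
    rw [Finset.mem_powerset] at hB
    have hdisj : Disjoint A B := Finset.disjoint_of_subset_left hA
      (Finset.disjoint_of_subset_right hB hDI)
    rw [Finset.card_union_of_disjoint hdisj, marginal_union N v i B hB A hA,
      Nat.sub_sub N.card A.card B.card]
    ring
  rw [Finset.sum_congr rfl step, ← Finset.mul_sum]
  congr 1
  have := Finset.sum_powerset_apply_card
    (fun m => (Nat.factorial (A.card + m) : ℝ) *
      Nat.factorial (N.card - A.card - m - 1) / Nat.factorial N.card) (x := I)
  rw [this]
  refine Finset.sum_congr rfl fun t _ => ?_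
  rw [nsmul_eq_mul]
  ring
end

section
/- For every even n there exists a family of simple games on n+1 players such that any deterministic algorithm computing the dependency graph using value queries must query the characteristic function at at least C(n, n/2) points: specifically, the games G_H (for each H ⊆ [n] with |H| = n/2) and G_0 defined so that G_0 has v_0(S) = 1 iff |S ∩ [n]| ≥ n/2, and G_H agrees with G_0 except v_H(H) = 0 and v_H(H ∪ {a}) = 1 for an extra player a, cannot all be distinguished from G_0 with fewer than C(n, n/2) queries; player a is a dummy in G_0 but not in any G_H. -/
open Finset

/-- Number of players of the "ground set" `[n]` present in a coalition
(players are `some x`, the extra player `a` is `none`). -/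
def bodyCard (n : ℕ) (S : Finset (Option (Fin n))) : ℕ :=
  (Finset.univ.filter (fun x : Fin n => some x ∈ S)).card

/-- The game `G₀`: a coalition wins iff it contains at least `n/2` ground players. -/
noncomputable def vZero (n : ℕ) (S : Finset (Option (Fin n))) : ℝ :=
  if n / 2 ≤ bodyCard n S then 1 else 0

/-- The game `G_H`: agrees with `G₀` except that the coalition `H` itself loses
(while `H ∪ {a}` still wins). -/
noncomputable def vH (n : ℕ) (H : Finset (Fin n)) (S : Finset (Option (Fin n))) : ℝ :=
  if S = H.image some then 0 else vZero n S

lemma bodyCard_mono {n : ℕ} {S T : Finset (Option (Fin n))} (h : S ⊆ T) :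
    bodyCard n S ≤ bodyCard n T := by
  apply Finset.card_le_card
  intro x hx
  simp only [Finset.mem_filter] at *
  exact ⟨hx.1, h hx.2⟩

lemma bodyCard_image {n : ℕ} (H : Finset (Fin n)) :
    bodyCard n (H.image some) = H.card := by
  unfold bodyCard
  congr 1
  ext x
  simp

lemma bodyCard_insert_none {n : ℕ} (S : Finset (Option (Fin n))) :
    bodyCard n (insert none S) = bodyCard n S := by
  unfold bodyCard
  congr 1
  ext x
  simp

lemma vZero_mono {n : ℕ} : Monotone (vZero n) := by
  intro S T h
  unfold vZero
  split_ifs with h1 h2 h2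
  · norm_num
  · exact absurd (le_trans h1 (bodyCard_mono h)) h2
  · norm_num
  · norm_num

/-- Query lower bound: fewer than `C(n, n/2)` value queries cannot distinguish `G₀`
from all games `G_H`; the extra player `a = none` is a dummy in `G₀` but pivotal
for `H` in `G_H`, and each `v_H` is monotone. -/
theorem dependencyGraph_query_lower_bound (n : ℕ) (hn : Even n) (hpos : 0 < n)
    (Q : Finset (Finset (Option (Fin n)))) (hQ : Q.card < Nat.choose n (n / 2)) :
    ∃ H : Finset (Fin n), H.card = n / 2 ∧
      (∀ S ∈ Q, vH n H S = vZero n S) ∧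
      Monotone (vH n H) ∧
      vH n H ∅ = 0 ∧ vZero n ∅ = 0 ∧
      (∀ S : Finset (Option (Fin n)), vZero n (insert none S) = vZero n S) ∧
      vH n H (H.image some) = 0 ∧ vH n H (insert none (H.image some)) = 1 := by
  obtain ⟨k, hk⟩ := hn
  have hhalf : 0 < n / 2 := Nat.div_pos (by omega) (by norm_num)
  -- find H with H.image some ∉ Q
  obtain ⟨H, hHmem, hHnotQ⟩ :
      ∃ H ∈ Finset.powersetCard (n / 2) (Finset.univ : Finset (Fin n)),
        H.image some ∉ Q := by
    by_contra hcon
    push_neg at hcon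
    have hsub : (Finset.powersetCard (n / 2) (Finset.univ : Finset (Fin n))).image
        (fun H => H.image some) ⊆ Q := by
      intro S hS
      simp only [Finset.mem_image] at hS
      obtain ⟨H, hH, rfl⟩ := hS
      exact hcon H hH
    have hcard := Finset.card_le_card hsub
    rw [Finset.card_image_of_injective _
      (Finset.image_injective (Option.some_injective (Fin n))),
      Finset.card_powersetCard, Finset.card_univ, Fintype.card_fin] at hcard
    omega
  simp only [Finset.mem_powersetCard_univ] at hHmem
  refine ⟨H, hHmem, ?_, ?_, ?_, ?_, ?_, ?_, ?_⟩
  · intro S hS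
    have : S ≠ H.image some := fun h => hHnotQ (h ▸ hS)
    simp [vH, this]
  · -- monotone
    intro S T hST
    unfold vH
    by_cases hT : T = H.image some
    · subst hT
      by_cases hS : S = H.image some
      · simp [hS]
      · simp only [if_neg hS, if_pos rfl]
        have hssub : S ⊂ H.image some := lt_of_le_of_ne hST hS
        have : bodyCard n S < n / 2 := by
          rw [← hHmem, ← bodyCard_image H]
          apply Finset.card_lt_card
          constructor
          · intro x hx
            simp only [Finset.mem_filter] at *
            exact ⟨hx.1, hssub.1 hx.2⟩
          · intro hsub2
            obtain ⟨y, hy1, hy2⟩ := Finset.exists_of_ssubset hssub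
            obtain ⟨x, _, rfl⟩ := Finset.mem_image.mp hy1
            have := hsub2 (Finset.mem_filter.mpr ⟨Finset.mem_univ x, hy1⟩)
            exact hy2 (Finset.mem_filter.mp this).2
        simp [vZero, Nat.not_le.mpr this]
    · rw [if_neg hT]
      by_cases hS : S = H.image some
      · rw [if_pos hS]
        unfold vZero
        split_ifs <;> norm_num
      · rw [if_neg hS]
        exact vZero_mono hST
  · have h1 : (∅ : Finset (Option (Fin n))) ≠ H.image some := by
      intro h
      have : H = ∅ := by
        have := Finset.image_eq_empty.mp h.symm
        exact this
      rw [this] at hHmem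
      simp at hHmem
      omega
    have h2 : bodyCard n (∅ : Finset (Option (Fin n))) = 0 := by
      simp [bodyCard]
    simp [vH, h1, vZero, h2, Nat.not_le.mpr hhalf]
  · have h2 : bodyCard n (∅ : Finset (Option (Fin n))) = 0 := by
      simp [bodyCard]
    simp [vZero, h2, Nat.not_le.mpr hhalf]
  · intro S
    simp [vZero, bodyCard_insert_none]
  · simp [vH]
  · have hne : insert none (H.image some) ≠ H.image some := by
      intro h
      have : (none : Option (Fin n)) ∈ H.image some := h ▸ Finset.mem_insert_self _ _
      simp at this
    rw [vH, if_neg hne, vZero, bodyCard_insert_none, bodyCard_image, hHmem, if_pos le_rfl]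
end

section
/- In a simple game (N,v), if player i positively depends on player j, then there exists a minimal winning coalition containing both i and j (the 'only if' direction of Theorem 3): choosing S ⊆ N\{i,j} minimal with the property that S ∪ {i,j} wins while S ∪ {i} and S ∪ {j} lose, the coalition S ∪ {i,j} is a minimal winning coalition. -/
/-- If `i` positively depends on `j` in a simple game, then some minimal winning
coalition contains both; moreover for any inclusion-minimal witness `S`,
the coalition `S ∪ {i,j}` is a minimal winning coalition. -/
theorem posDepends_minimalWinning {α : Type*} [DecidableEq α]
    (N : Finset α) (v : Finset α → ℝ) (hv0 : v ∅ = 0)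
    (hmono : ∀ S T : Finset α, S ⊆ T → T ⊆ N → v S ≤ v T)
    (hvals : ∀ S ⊆ N, v S = 0 ∨ v S = 1)
    (i j : α) (hi : i ∈ N) (hj : j ∈ N) (hij : i ≠ j)
    (hdep : ∃ S ⊆ N \ {i, j},
      v (insert i (insert j S)) = 1 ∧ v (insert i S) = 0 ∧ v (insert j S) = 0) :
    (∃ T ⊆ N, v T = 1 ∧ (∀ k ∈ T, v (T.erase k) = 0) ∧ i ∈ T ∧ j ∈ T) ∧
    (∀ S ⊆ N \ {i, j},
      (v (insert i (insert j S)) = 1 ∧ v (insert i S) = 0 ∧ v (insert j S) = 0) →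
      (∀ S' ⊆ N \ {i, j}, S' ⊂ S →
        ¬ (v (insert i (insert j S')) = 1 ∧ v (insert i S') = 0 ∧
            v (insert j S') = 0)) →
      (v (insert i (insert j S)) = 1 ∧
        ∀ k ∈ insert i (insert j S), v ((insert i (insert j S)).erase k) = 0)) := by
  classical
  have hzero : ∀ A B : Finset α, A ⊆ B → B ⊆ N → v B = 0 → v A = 0 := by
    intro A B hAB hBN hB
    rcases hvals A (hAB.trans hBN) with h | h
    · exact h
    · have h1 := hmono A B hAB hBN
      rw [h, hB] at h1; linarith
  have main : ∀ S ⊆ N \ {i, j},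
      (v (insert i (insert j S)) = 1 ∧ v (insert i S) = 0 ∧ v (insert j S) = 0) →
      (∀ S' ⊆ N \ {i, j}, S' ⊂ S →
        ¬ (v (insert i (insert j S')) = 1 ∧ v (insert i S') = 0 ∧
            v (insert j S') = 0)) →
      (v (insert i (insert j S)) = 1 ∧
        ∀ k ∈ insert i (insert j S), v ((insert i (insert j S)).erase k) = 0) := by
    intro S hS hw hmin
    obtain ⟨h1, h2, h3⟩ := hw
    have hiS : i ∉ S := fun h => by simpa using hS h
    have hjS : j ∉ S := fun h => by simpa using hS h
    have hSN : S ⊆ N := hS.trans (Finset.sdiff_subset)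
    have hTN : insert i (insert j S) ⊆ N := by
      refine Finset.insert_subset hi (Finset.insert_subset hj hSN)
    refine ⟨h1, ?_⟩
    intro k hk
    rcases Finset.mem_insert.mp hk with rfl | hk
    · have he : (insert k (insert j S)).erase k = insert j S := by
        rw [Finset.erase_insert (by simp [hij, hiS, hjS])]
      rw [he]; exact h3
    rcases Finset.mem_insert.mp hk with rfl | hk
    · have he : (insert i (insert k S)).erase k = insert i S := by
        rw [Finset.erase_insert_of_ne hij, Finset.erase_insert hjS]
      rw [he]; exact h2
    · have hki : k ≠ i := fun h => hiS (h ▸ hk)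
      have hkj : k ≠ j := fun h => hjS (h ▸ hk)
      have he : (insert i (insert j S)).erase k
          = insert i (insert j (S.erase k)) := by
        rw [Finset.erase_insert_of_ne hki.symm, Finset.erase_insert_of_ne hkj.symm]
      rw [he]
      by_contra hne
      have hsub : S.erase k ⊆ N \ {i, j} := (Finset.erase_subset _ _).trans hS
      have h1' : v (insert i (insert j (S.erase k))) = 1 := by
        rcases hvals _ (Finset.insert_subset hi
          (Finset.insert_subset hj ((Finset.erase_subset _ _).trans hSN))) with h | h
        · exact absurd h hne
        · exact h
      have h2' : v (insert i (S.erase k)) = 0 :=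
        hzero _ (insert i S) (Finset.insert_subset_insert _ (Finset.erase_subset _ _))
          (Finset.insert_subset hi hSN) h2
      have h3' : v (insert j (S.erase k)) = 0 :=
        hzero _ (insert j S) (Finset.insert_subset_insert _ (Finset.erase_subset _ _))
          (Finset.insert_subset hj hSN) h3
      exact hmin _ hsub (Finset.erase_ssubset hk) ⟨h1', h2', h3'⟩
  refine ⟨?_, main⟩
  obtain ⟨S0, hS0, hw0⟩ := hdep
  set P : Finset α → Prop := fun S =>
    v (insert i (insert j S)) = 1 ∧ v (insert i S) = 0 ∧ v (insert j S) = 0 with hP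
  have hne : ((N \ {i, j}).powerset.filter P).Nonempty :=
    ⟨S0, Finset.mem_filter.mpr ⟨Finset.mem_powerset.mpr hS0, hw0⟩⟩
  obtain ⟨S, hSmem, hSmin⟩ := Finset.exists_min_image _ Finset.card hne
  obtain ⟨hSsub, hSP⟩ := Finset.mem_filter.mp hSmem
  replace hSsub := Finset.mem_powerset.mp hSsub
  have hmin : ∀ S' ⊆ N \ {i, j}, S' ⊂ S → ¬ P S' := by
    intro S' hS' hss hPS'
    have hle := hSmin S' (Finset.mem_filter.mpr ⟨Finset.mem_powerset.mpr hS', hPS'⟩)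
    exact absurd (Finset.card_lt_card hss) (not_lt.mpr hle)
  obtain ⟨hwin, hmer⟩ := main S hSsub hSP hmin
  refine ⟨insert i (insert j S), ?_, hwin, hmer, Finset.mem_insert_self _ _,
    Finset.mem_insert_of_mem (Finset.mem_insert_self _ _)⟩
  exact Finset.insert_subset hi (Finset.insert_subset hj (hSsub.trans Finset.sdiff_subset))
end

section
/- In any cooperative game (N,v), the characteristic function v is completely determined by the values v(S) for S ⊆ D(i) ∪ {i} together with the dependency structure, in the following sense: for any i ∈ N and any coalition C ⊆ N\{i}, v(C ∪ {i}) − v(C) = v((C ∩ D(i)) ∪ {i}) − v(C ∩ D(i)). -/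
open Finset

/-- The marginal contribution of a player to any coalition is determined by the
coalition's intersection with the player's dependency set. -/
theorem marginal_determined_by_depSet {α : Type*} [DecidableEq α]
    (N : Finset α) (v : Finset α → ℝ) (hv0 : v ∅ = 0) (i : α) (hi : i ∈ N)
    (C : Finset α) (hC : C ⊆ N.erase i) :
    v (insert i C) - v C =
      v (insert i (C ∩ depSet N v i)) - v (C ∩ depSet N v i) := by
  classical
  revert hC
  induction C using Finset.strongInduction with
  | _ C ih =>
    intro hC
    by_cases h : C ⊆ depSet N v i
    · rw [Finset.inter_eq_left.mpr h]
    · obtain ⟨j, hjC, hjD⟩ := Finset.not_subset.mp h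
      have hjN : j ∈ N.erase i := hC hjC
      have hkey : ∀ S ⊆ N \ {i, j},
          v (insert i (insert j S)) - v (insert j S) = v (insert i S) - v S := by
        intro S hS
        by_contra hne
        exact hjD (Finset.mem_filter.mpr ⟨hjN, S, hS, hne⟩)
      have hsub : C.erase j ⊆ N \ {i, j} := by
        intro x hx
        simp only [Finset.mem_erase] at hx
        have hx2 := hC hx.2
        simp only [Finset.mem_erase] at hx2
        simp only [Finset.mem_sdiff, Finset.mem_insert, Finset.mem_singleton]
        exact ⟨hx2.2, by tauto⟩
      have hC' : insert j (C.erase j) = C := Finset.insert_erase hjC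
      have h1 := hkey (C.erase j) hsub
      rw [hC'] at h1
      have h2 := ih (C.erase j) (Finset.erase_ssubset hjC)
        ((Finset.erase_subset _ _).trans hC)
      have h3 : C.erase j ∩ depSet N v i = C ∩ depSet N v i := by
        ext x
        simp only [Finset.mem_inter, Finset.mem_erase]
        constructor
        · rintro ⟨⟨_, hx⟩, hd⟩; exact ⟨hx, hd⟩
        · rintro ⟨hx, hd⟩; exact ⟨⟨fun he => hjD (he ▸ hd), hx⟩, hd⟩
      rw [h1, h2, h3]
end
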